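/- Let g : (0,∞) → (0,∞) be continuous with g(t) ≥ m₀ > 0 and t ↦ g(t)/t decreasing, and let φ : (0,∞) → [0,∞) be continuous and nondecreasing with φ(t) → 0 as t → 0⁺ and φ(t) → ∞ as t → ∞, φ strictly increasing where positive. Then the equation g(t²) = t²·φ(t) has a unique positive solution t₀ (abstract version of the unique Nehari projection: uniqueness of t_u with h_u'(t_u) = 0). -/

import Mathlib

open Set Filter

/-- Abstract fibering lemma (unique Nehari projection): if `g : (0,∞) → (0,∞)` is
continuous with `g ≥ m₀ > 0` and `t ↦ g t / t` decreasing on `(0,∞)`, and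
`φ : (0,∞) → [0,∞)` is continuous, nondecreasing, strictly increasing where it is
positive, with `φ(t) → 0` as `t → 0⁺` and `φ(t) → ∞` as `t → ∞`, then the equation
`g(t²) = t² φ(t)` has a unique positive solution `t₀`. -/
theorem stmt12 (g φ : ℝ → ℝ) (m₀ : ℝ) (hm₀ : 0 < m₀)
    (hgc : ContinuousOn g (Ioi 0))
    (hglb : ∀ t, 0 < t → m₀ ≤ g t)
    (hgdec : AntitoneOn (fun t => g t / t) (Ioi 0))
    (hφc : ContinuousOn φ (Ioi 0))
    (hφ0 : ∀ t, 0 < t → 0 ≤ φ t)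
    (hφmono : MonotoneOn φ (Ioi 0))
    (hφstrict : StrictMonoOn φ {t : ℝ | 0 < t ∧ 0 < φ t})
    (hφlim0 : Tendsto φ (nhdsWithin 0 (Ioi 0)) (nhds 0))
    (hφliminf : Tendsto φ atTop atTop) :
    ∃! t₀ : ℝ, 0 < t₀ ∧ g (t₀ ^ 2) = t₀ ^ 2 * φ t₀ := by
  -- uniqueness key
  have key : ∀ u v : ℝ, 0 < u → 0 < v → u < v →
      g (u ^ 2) = u ^ 2 * φ u → g (v ^ 2) = v ^ 2 * φ v → False := by
    intro u v hu hv huv heu hev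
    have hu2 : (0:ℝ) < u ^ 2 := pow_pos hu 2
    have hv2 : (0:ℝ) < v ^ 2 := pow_pos hv 2
    have hφu : 0 < φ u := by
      have := hglb (u ^ 2) hu2
      nlinarith
    have hφv : 0 < φ v := by
      have := hglb (v ^ 2) hv2
      nlinarith
    have hle : g (v ^ 2) / v ^ 2 ≤ g (u ^ 2) / u ^ 2 :=
      hgdec hu2 hv2 (by nlinarith)
    have h1 : φ v ≤ φ u := by
      have h2 := (div_le_div_iff₀ hv2 hu2).mp hle
      rw [heu, hev] at h2
      nlinarith [mul_pos hu2 hv2]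
    exact absurd (hφstrict ⟨hu, hφu⟩ ⟨hv, hφv⟩ huv) (not_lt.mpr h1)
  -- pick a small
  have hev1 : ∀ᶠ t in nhdsWithin 0 (Ioi 0), φ t < m₀ :=
    hφlim0.eventually (Filter.Tendsto.eventually_lt_const hm₀ tendsto_id) |>.mono (fun t ht => ht)
  have hev2 : Ioo (0:ℝ) 1 ∈ nhdsWithin 0 (Ioi 0) :=
    Ioo_mem_nhdsGT_of_mem (by constructor <;> norm_num)
  obtain ⟨a, haφ, ha0, ha1⟩ := (hev1.and hev2).exists
  -- pick b large
  obtain ⟨b, hbφ, hb1⟩ := ((hφliminf.eventually_gt_atTop (g 1)).and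
    (eventually_gt_atTop (max 1 a))).exists
  have hb1' : (1:ℝ) < b := lt_of_le_of_lt (le_max_left _ _) hb1
  have hab : a < b := lt_of_le_of_lt (le_of_lt ha1) hb1'
  have hb0 : (0:ℝ) < b := lt_trans one_pos hb1'
  -- F
  set F : ℝ → ℝ := fun t => t ^ 2 * φ t - g (t ^ 2) with hF
  have hsub : Icc a b ⊆ Ioi 0 := fun x hx => lt_of_lt_of_le ha0 hx.1
  have hFc : ContinuousOn F (Icc a b) := by
    apply ContinuousOn.sub
    · exact ((continuous_pow 2).continuousOn).mul (hφc.mono hsub)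
    · exact hgc.comp ((continuous_pow 2).continuousOn)
        (fun x hx => mem_Ioi.mpr (pow_pos (hsub hx) 2))
  have hFa : F a < 0 := by
    have h1 : m₀ ≤ g (a ^ 2) := hglb _ (pow_pos ha0 2)
    have h2 : 0 ≤ φ a := hφ0 a ha0
    have ha2 : a ^ 2 ≤ 1 := by nlinarith
    have : a ^ 2 * φ a ≤ φ a := by nlinarith [mul_le_mul_of_nonneg_right ha2 h2]
    simp only [hF]
    nlinarith
  have hFb : 0 < F b := by
    have hle : g (b ^ 2) / b ^ 2 ≤ g 1 / 1 :=
      hgdec (by norm_num) (pow_pos hb0 2) (by nlinarith)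
    have hb2 : (0:ℝ) < b ^ 2 := pow_pos hb0 2
    rw [div_one, div_le_iff₀ hb2] at hle
    simp only [hF]
    nlinarith
  obtain ⟨t₀, ht₀mem, ht₀⟩ := intermediate_value_Icc hab.le hFc ⟨hFa.le, hFb.le⟩
  have ht₀pos : 0 < t₀ := hsub ht₀mem
  refine ⟨t₀, ⟨ht₀pos, by simp only [hF] at ht₀; linarith⟩, ?_⟩
  rintro y ⟨hy, hey⟩
  have heq : g (t₀ ^ 2) = t₀ ^ 2 * φ t₀ := by simp only [hF] at ht₀; linarith
  rcases lt_trichotomy y t₀ with h | h | h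
  · exact absurd (key y t₀ hy ht₀pos h hey heq) (fun h => h)
  · exact h
  · exact absurd (key t₀ y ht₀pos hy h heq hey) (fun h => h)
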